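/- Let ‖·‖ be a norm on ℝ² and h : [0,∞) → ℝ strictly convex and increasing, and set c(z) = h(‖z‖). Then for every p ∈ ℝ², the face ∂c*(p) has empty interior in ℝ²; equivalently, c is not affine on any open subset of ℝ². -/

import Mathlib

/-- The Legendre–Fenchel conjugate of a real-valued function on `ℝ²`, valued in `EReal`. -/
noncomputable def fenchelConj (c : EuclideanSpace ℝ (Fin 2) → ℝ)
    (p : EuclideanSpace ℝ (Fin 2)) : EReal :=
  ⨆ z, (((inner ℝ p z : ℝ) - c z : ℝ) : EReal)

/-- A convex monotone function on `[0,∞)` has a nonnegative subgradient at any `r > 0`. -/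
lemma exists_scalar_subgrad (h : ℝ → ℝ) (hconv : ConvexOn ℝ (Set.Ici 0) h)
    (hmono : MonotoneOn h (Set.Ici 0)) {r : ℝ} (hr : 0 < r) :
    ∃ m : ℝ, 0 ≤ m ∧ ∀ t, 0 ≤ t → h r + m * (t - r) ≤ h t := by
  set Sl : Set ℝ := (fun t => (h t - h r) / (t - r)) '' Set.Ioi r with hSl
  have hne : Sl.Nonempty := ⟨_, ⟨r + 1, by simp [Set.mem_Ioi], rfl⟩⟩
  set L0 : ℝ := (h r - h (r / 2)) / (r - r / 2) with hL0
  have hhalf : (r / 2 : ℝ) ∈ Set.Ici (0:ℝ) := by simp; linarith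
  have hrmem : r ∈ Set.Ici (0:ℝ) := hr.le
  have hlb : ∀ a ∈ Sl, L0 ≤ a := by
    rintro a ⟨t, ht, rfl⟩
    have ht' : r < t := ht
    exact hconv.slope_mono_adjacent hhalf (by exact le_trans hr.le ht'.le)
      (by linarith) ht'
  have hbdd : BddBelow Sl := ⟨L0, hlb⟩
  have hL0nn : 0 ≤ L0 := by
    apply div_nonneg
    · have := hmono hhalf hrmem (by linarith)
      linarith
    · linarith
  refine ⟨sInf Sl, le_trans hL0nn (le_csInf hne hlb), fun t ht => ?_⟩
  rcases lt_trichotomy t r with hlt | rfl | hgt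
  · have hslope : (h r - h t) / (r - t) ≤ sInf Sl := by
      apply le_csInf hne
      rintro a ⟨u, hu, rfl⟩
      exact hconv.slope_mono_adjacent ht (le_trans hr.le (le_of_lt hu)) hlt hu
    have hrt : 0 < r - t := by linarith
    have := (div_le_iff₀ hrt).1 hslope
    nlinarith
  · simp
  · have hslope : sInf Sl ≤ (h t - h r) / (t - r) :=
      csInf_le hbdd ⟨t, hgt, rfl⟩
    have htr : 0 < t - r := by linarith
    have := (le_div_iff₀ htr).1 hslope
    nlinarith

/-- Hahn–Banach支持: a linear functional (as a vector) supporting the norm `N` at `w ≠ 0`. -/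
lemma exists_support_vector (N : EuclideanSpace ℝ (Fin 2) → ℝ)
    (hNsmul : ∀ (a : ℝ) (z : EuclideanSpace ℝ (Fin 2)), N (a • z) = |a| * N z)
    (hNadd : ∀ z w, N (z + w) ≤ N z + N w)
    (hNnn : ∀ z, 0 ≤ N z)
    {w : EuclideanSpace ℝ (Fin 2)} (hw : w ≠ 0) :
    ∃ v : EuclideanSpace ℝ (Fin 2),
      (∀ u, (inner ℝ v u : ℝ) ≤ N u) ∧ (inner ℝ v w : ℝ) = N w := by
  set f : EuclideanSpace ℝ (Fin 2) →ₗ.[ℝ] ℝ := LinearPMap.mkSpanSingleton w (N w) hw with hf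
  have hdom : f.domain = Submodule.span ℝ {w} := rfl
  have hfle : ∀ x : f.domain, f x ≤ N x := by
    rintro ⟨z, hz⟩
    rw [hdom] at hz
    obtain ⟨t, rfl⟩ := Submodule.mem_span_singleton.1 hz
    have : f ⟨t • w, hz⟩ = t • N w := LinearPMap.mkSpanSingleton'_apply _ _ _ t _
    rw [this, hNsmul t w]
    have : t ≤ |t| := le_abs_self t
    have := hNnn w
    simp only [smul_eq_mul]
    nlinarith
  obtain ⟨g, hg_eq, hg_le⟩ := exists_extension_of_le_sublinear f N
    (fun a ha z => by rw [hNsmul, abs_of_pos ha]) hNadd hfle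
  have hgw : g w = N w := by
    have hmem : w ∈ f.domain := by
      rw [hdom]; exact Submodule.mem_span_singleton_self w
    have h1 : f ⟨w, hmem⟩ = N w := LinearPMap.mkSpanSingleton_apply _ _ hw _
    have h2 := hg_eq ⟨w, hmem⟩
    simpa [h1] using h2
  set G : EuclideanSpace ℝ (Fin 2) →L[ℝ] ℝ := LinearMap.toContinuousLinearMap g with hG
  refine ⟨(InnerProductSpace.toDual ℝ (EuclideanSpace ℝ (Fin 2))).symm G, ?_, ?_⟩
  · intro u
    rw [InnerProductSpace.toDual_symm_apply]
    exact hg_le u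
  · rw [InnerProductSpace.toDual_symm_apply]
    exact hgw

/-- for `c z = h (N z)` with `N` a norm on `ℝ²` and `h` strictly convex
increasing on `[0,∞)`, every face `∂c*(p)` has empty interior in `ℝ²`. -/
theorem stmt5 (N : EuclideanSpace ℝ (Fin 2) → ℝ)
    (hN0 : ∀ z, N z = 0 ↔ z = 0)
    (hNsmul : ∀ (a : ℝ) (z : EuclideanSpace ℝ (Fin 2)), N (a • z) = |a| * N z)
    (hNadd : ∀ z w, N (z + w) ≤ N z + N w)
    (h : ℝ → ℝ)
    (hmono : MonotoneOn h (Set.Ici 0))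
    (hconv : StrictConvexOn ℝ (Set.Ici 0) h)
    (c : EuclideanSpace ℝ (Fin 2) → ℝ) (hc : ∀ z, c z = h (N z))
    (p : EuclideanSpace ℝ (Fin 2)) :
    interior {z : EuclideanSpace ℝ (Fin 2) |
        ∀ q, fenchelConj c p + ((inner ℝ z (q - p) : ℝ) : EReal) ≤ fenchelConj c q} = ∅ := by
  have hNnn : ∀ z, 0 ≤ N z := by
    intro z
    have h0 : N (0 : EuclideanSpace ℝ (Fin 2)) = 0 := (hN0 0).2 rfl
    have h1 : N ((-1 : ℝ) • z) = N z := by rw [hNsmul]; simp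
    have h2 := hNadd z ((-1 : ℝ) • z)
    have h3 : z + (-1 : ℝ) • z = 0 := by simp
    rw [h3, h0, h1] at h2
    linarith
  have hconvOn : ConvexOn ℝ (Set.Ici 0) h := hconv.convexOn
  rw [Set.eq_empty_iff_forall_notMem]
  intro x hx
  obtain ⟨ρ, hρ, hball⟩ := Metric.isOpen_iff.1 isOpen_interior x hx
  have hmemS : ∀ z ∈ Metric.ball x ρ, ∀ q,
      fenchelConj c p + ((inner ℝ z (q - p) : ℝ) : EReal) ≤ fenchelConj c q :=
    fun z hz => interior_subset (hball hz)
  have hlow : ∀ q z, (((inner ℝ q z : ℝ) - c z : ℝ) : EReal) ≤ fenchelConj c q :=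
    fun q z => le_iSup (fun z => (((inner ℝ q z : ℝ) - c z : ℝ) : EReal)) z
  have hne_bot : fenchelConj c p ≠ ⊥ := by
    intro hbot
    exact (EReal.bot_lt_coe _).not_ge (hbot ▸ hlow p 0)
  have hC0 : fenchelConj c 0 ≤ ((-(h 0) : ℝ) : EReal) := by
    refine iSup_le fun z => ?_
    rw [EReal.coe_le_coe_iff]
    have h1 : (inner ℝ (0 : EuclideanSpace ℝ (Fin 2)) z : ℝ) = 0 := inner_zero_left z
    have h2 : h 0 ≤ h (N z) := hmono (Set.mem_Ici.2 le_rfl) (Set.mem_Ici.2 (hNnn z)) (hNnn z)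
    rw [hc z, h1]
    linarith
  have hx0 := hmemS x (Metric.mem_ball_self hρ) 0
  have hne_top : fenchelConj c p ≠ ⊤ := by
    intro htop
    rw [htop, EReal.top_add_coe] at hx0
    have := le_trans hx0 hC0
    exact absurd this (by simp)
  set s : ℝ := (fenchelConj c p).toReal with hs
  have hfp : fenchelConj c p = (s : EReal) := (EReal.coe_toReal hne_top hne_bot).symm
  -- choose a nonzero point in the half ball
  obtain ⟨w, hwball, hwne⟩ :
      ∃ w : EuclideanSpace ℝ (Fin 2), dist w x < ρ / 2 ∧ w ≠ 0 := by
    by_cases hx0' : x = 0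
    · refine ⟨(ρ/4) • EuclideanSpace.single (0 : Fin 2) (1:ℝ), ?_, ?_⟩
      · rw [hx0', dist_zero_right, norm_smul, EuclideanSpace.norm_single]
        simp only [norm_one, mul_one, Real.norm_eq_abs]
        rw [abs_of_pos (by linarith)]
        linarith
      · apply smul_ne_zero (by positivity : (ρ/4 : ℝ) ≠ 0)
        intro hz
        have := congrArg norm hz
        rw [EuclideanSpace.norm_single] at this
        simp at this
    · exact ⟨x, by rw [dist_self]; linarith, hx0'⟩
  set r : ℝ := N w with hrw
  have hr : 0 < r := lt_of_le_of_ne (hNnn w) (fun e => hwne ((hN0 w).1 e.symm))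
  set ε : ℝ := ρ / (2 * (‖w‖ + 1)) with hε
  have hεpos : 0 < ε := div_pos hρ (by positivity)
  have hεw : ε * ‖w‖ < ρ / 2 := by
    rw [hε, div_mul_eq_mul_div, div_lt_iff₀ (by positivity)]
    nlinarith [norm_nonneg w]
  have hmem : ∀ t : ℝ, 0 ≤ t - 1 → t - 1 ≤ ε → t • w ∈ Metric.ball x ρ := by
    intro t h1 h2
    rw [Metric.mem_ball]
    have hd1 : dist (t • w) w = (t - 1) * ‖w‖ := by
      rw [dist_eq_norm]
      have : t • w - w = (t - 1) • w := by
        rw [sub_smul, one_smul]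
      rw [this, norm_smul, Real.norm_eq_abs, abs_of_nonneg h1]
    have hd2 : (t - 1) * ‖w‖ ≤ ε * ‖w‖ :=
      mul_le_mul_of_nonneg_right h2 (norm_nonneg w)
    calc dist (t • w) x ≤ dist (t • w) w + dist w x := dist_triangle _ _ _
      _ < ρ / 2 + ρ / 2 := by rw [hd1]; exact add_lt_add_of_le_of_lt (le_trans hd2 hεw.le) hwball
      _ = ρ := by ring
  -- key: the function is affine along the ray through w inside the ball
  have key : ∀ t : ℝ, 0 < t → t • w ∈ Metric.ball x ρ →
      h (t * r) = t * (inner ℝ p w : ℝ) - s := by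
    intro t ht htball
    have hSz := hmemS (t • w) htball
    have hrt : 0 < t * r := mul_pos ht hr
    obtain ⟨m, hm0, hmsub⟩ := exists_scalar_subgrad h hconvOn hmono hrt
    obtain ⟨v, hvle, hvw⟩ := exists_support_vector N hNsmul hNadd hNnn hwne
    set q : EuclideanSpace ℝ (Fin 2) := m • v with hq
    have hbound : fenchelConj c q ≤ ((m * (t * r) - h (t * r) : ℝ) : EReal) := by
      refine iSup_le fun u => ?_
      rw [EReal.coe_le_coe_iff]
      have h1 : (inner ℝ q u : ℝ) = m * (inner ℝ v u : ℝ) := real_inner_smul_left v u m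
      have h2 : m * (inner ℝ v u : ℝ) ≤ m * N u := mul_le_mul_of_nonneg_left (hvle u) hm0
      have h3 := hmsub (N u) (hNnn u)
      rw [hc u, h1]
      nlinarith
    have hmemq := hSz q
    rw [hfp] at hmemq
    have hle := le_trans hmemq hbound
    rw [← EReal.coe_add, EReal.coe_le_coe_iff] at hle
    have hiq : (inner ℝ (t • w) q : ℝ) = m * (t * r) := by
      rw [hq, real_inner_smul_left, real_inner_smul_right, real_inner_comm v w, hvw, hrw]
      ring
    have hsub : (inner ℝ (t • w) (q - p) : ℝ)
        = (inner ℝ (t • w) q : ℝ) - (inner ℝ (t • w) p : ℝ) := inner_sub_right _ _ _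
    have hinner' : (inner ℝ (t • w) p : ℝ) = t * (inner ℝ p w : ℝ) := by
      rw [real_inner_smul_left, real_inner_comm w p]
    have hup : h (t * r) ≤ t * (inner ℝ p w : ℝ) - s := by
      rw [hsub, hiq, hinner'] at hle; linarith
    have hct : c (t • w) = h (t * r) := by
      rw [hc, hNsmul, abs_of_pos ht]
    have hlo : t * (inner ℝ p w : ℝ) - s ≤ h (t * r) := by
      have hl := hlow p (t • w)
      rw [hfp, EReal.coe_le_coe_iff] at hl
      have hinner : (inner ℝ p (t • w) : ℝ) = t * (inner ℝ p w : ℝ) :=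
        real_inner_smul_right p w t
      rw [hct, hinner] at hl
      linarith
    linarith
  have h1m := key 1 one_pos (hmem 1 (by norm_num) (by linarith))
  have h2m := key (1 + ε) (by linarith) (hmem (1 + ε) (by linarith) (by linarith))
  have h3m := key (1 + ε/2) (by linarith) (hmem (1 + ε/2) (by linarith) (by linarith))
  have hxy : r ≠ (1 + ε) * r := by nlinarith
  have hy0 : (0:ℝ) ≤ (1 + ε) * r := by nlinarith
  have hsc := hconv.2 (Set.mem_Ici.2 hr.le) (Set.mem_Ici.2 hy0) hxy
    (by norm_num : (0:ℝ) < 1/2) (by norm_num : (0:ℝ) < 1/2) (by norm_num)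
  have hmid : (1/2 : ℝ) • r + (1/2 : ℝ) • ((1 + ε) * r) = (1 + ε/2) * r := by
    simp only [smul_eq_mul]; ring
  rw [hmid, smul_eq_mul, smul_eq_mul] at hsc
  rw [one_mul] at h1m
  rw [h3m, h1m, h2m] at hsc
  nlinarith [hsc]
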